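/- Let J₂ be the 2×2 integer matrix [[0,1],[-1,0]]. If M is a 2×2 integer matrix with Mᵀ·M = I and M·M = -I (i.e. M is an isometry of the lattice A₁ ⊕ A₁ whose square is minus the identity), then there exists a 2×2 integer matrix P with Pᵀ·P = I such that P⁻¹·M·P = J₂. In particular, the lattice A₁ ⊕ A₁ has a unique structure of ℤ[i]-module up to isometries. -/

import Mathlib

open Matrix

/-- Let `J₂ = [[0,1],[-1,0]]`. If `M` is a `2×2` integer matrix with
`Mᵀ·M = I` and `M·M = -I` (an isometry of the lattice `A₁ ⊕ A₁` squaring to minus the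
identity), then there is a `2×2` integer matrix `P` with `Pᵀ·P = I` and `P⁻¹·M·P = J₂`.
In particular, `A₁ ⊕ A₁` has a unique structure of `ℤ[i]`-module up to isometries. -/
theorem stmt8 (M : Matrix (Fin 2) (Fin 2) ℤ)
    (horth : Mᵀ * M = 1) (hsq : M * M = -1) :
    ∃ P : Matrix (Fin 2) (Fin 2) ℤ,
      Pᵀ * P = 1 ∧ P⁻¹ * M * P = !![0, 1; -1, 0] := by
  set a := M 0 0 with ha
  set b := M 0 1 with hb
  set c := M 1 0 with hc
  set d := M 1 1 with hd
  have h00 := congrFun (congrFun horth 0) 0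
  have h01 := congrFun (congrFun horth 0) 1
  have h11 := congrFun (congrFun horth 1) 1
  have s00 := congrFun (congrFun hsq 0) 0
  have s01 := congrFun (congrFun hsq 0) 1
  have s10 := congrFun (congrFun hsq 1) 0
  have s11 := congrFun (congrFun hsq 1) 1
  simp [Matrix.mul_apply, Fin.sum_univ_two, Matrix.one_apply, Matrix.transpose_apply,
    ← ha, ← hb, ← hc, ← hd] at h00 h01 h11 s00 s01 s10 s11
  -- from s00 : a*a + b*c = -1, so b ≠ 0 and c ≠ 0
  have hM : M = !![a, b; c, d] := by
    ext i j; fin_cases i <;> fin_cases j <;> simp [ha, hb, hc, hd]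
  have hb2le : b * b ≤ 1 := by nlinarith [mul_self_nonneg d]
  have hc2le : c * c ≤ 1 := by nlinarith [mul_self_nonneg a]
  have hbcle : b * c ≤ -1 := by nlinarith [mul_self_nonneg a]
  have hb2 : b * b = 1 := by
    nlinarith [sq_nonneg (b*c+1), mul_nonneg (mul_self_nonneg b) (by linarith : (0:ℤ) ≤ 1 - c*c)]
  have hc2 : c * c = 1 := by
    nlinarith [sq_nonneg (b*c+1), mul_nonneg (mul_self_nonneg c) (by linarith : (0:ℤ) ≤ 1 - b*b)]
  have ha0 : a = 0 := by nlinarith [mul_self_nonneg a]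
  have hd0 : d = 0 := by nlinarith [mul_self_nonneg d]
  have hbc : b * c = -1 := by nlinarith
  have hc1 : c = -b := by linear_combination b * hbc - c * hb2
  have hb1 : b = 1 ∨ b = -1 := Int.isUnit_iff.mp (IsUnit.of_mul_eq_one b hb2)
  rcases hb1 with h | h
  · refine ⟨1, by simp, ?_⟩
    simp [hM, ha0, hd0, hc1, h]
  · refine ⟨!![1,0;0,-1], ?_, ?_⟩
    · ext i j; fin_cases i <;> fin_cases j <;>
        simp [Matrix.mul_apply, Fin.sum_univ_two, Matrix.one_apply, Matrix.vecHead, Matrix.vecTail]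
    · have hinv : (!![1,0;0,-1] : Matrix (Fin 2) (Fin 2) ℤ)⁻¹ = !![1,0;0,-1] := by
        apply inv_eq_left_inv
        ext i j; fin_cases i <;> fin_cases j <;>
          simp [Matrix.mul_apply, Fin.sum_univ_two, Matrix.one_apply]
      rw [hinv, hM, ha0, hd0, hc1, h]
      ext i j; fin_cases i <;> fin_cases j <;>
        simp [Matrix.mul_apply, Fin.sum_univ_two, Matrix.vecHead, Matrix.vecTail]
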